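/- For every infinite cardinal λ there exist infinite cardinals μ and θ with μ^{<θ} = μ < λ⁺ ≤ μ^θ; consequently λ⁺ is not λ⁺-square compact. -/

import Mathlib

universe u

/-- `κ`-compactness: every open cover has a subcover of cardinality less than `κ`. -/
def KCompact (κ : Cardinal.{u}) {X : Type u} (t : TopologicalSpace X) : Prop :=
  ∀ 𝒰 : Set (Set X), (∀ U ∈ 𝒰, t.IsOpen U) → ⋃₀ 𝒰 = Set.univ →
    ∃ 𝒰₀ ⊆ 𝒰, Cardinal.mk 𝒰₀ < κ ∧ ⋃₀ 𝒰₀ = Set.univ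

/-- The weight of a topological space: the least cardinality of a base. -/
noncomputable def tweight {X : Type u} (t : TopologicalSpace X) : Cardinal.{u} :=
  sInf {c | ∃ B : Set (Set X), @TopologicalSpace.IsTopologicalBasis X t B ∧ Cardinal.mk B = c}

/-- `κ` is `κ`-square compact: for every space of weight at most `κ`, if it is
`κ`-compact then its square is `κ`-compact. -/
def KSquareCompact (κ : Cardinal.{u}) : Prop :=
  ∀ (X : Type u) (t : TopologicalSpace X), tweight t ≤ κ → KCompact κ t →
    KCompact κ (@instTopologicalSpaceProd X X t t)


open Cardinal Set

section
variable (l : Cardinal.{u})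

noncomputable def th : Cardinal.{u} := sInf {c : Cardinal.{u} | l < l ^ c}

variable {l}
lemma two_le (hl : ℵ₀ ≤ l) : (2 : Cardinal) ≤ l := by
  refine le_trans ?_ hl
  exact_mod_cast (Cardinal.nat_lt_aleph0 2).le
lemma l_lt_pow_l (hl : ℵ₀ ≤ l) : l < l ^ l :=
  lt_of_lt_of_le (Cardinal.cantor l) (Cardinal.power_le_power_right (two_le hl))
lemma th_set_ne (hl : ℵ₀ ≤ l) : {c : Cardinal.{u} | l < l ^ c}.Nonempty := ⟨l, l_lt_pow_l hl⟩
lemma th_mem (hl : ℵ₀ ≤ l) : l < l ^ th l := csInf_mem (th_set_ne hl)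
lemma th_le_l (hl : ℵ₀ ≤ l) : th l ≤ l := csInf_le (OrderBot.bddBelow _) (l_lt_pow_l hl)
lemma aleph0_le_th (hl : ℵ₀ ≤ l) : ℵ₀ ≤ th l := by
  refine le_csInf (th_set_ne hl) fun c hc => ?_
  by_contra h
  exact absurd hc (not_lt.2 (Cardinal.pow_le hl (not_le.1 h)))
lemma pow_le_of_lt_th (hl : ℵ₀ ≤ l) {c : Cardinal.{u}} (hc : c < th l) : l ^ c ≤ l := by
  by_contra h
  have hmem : c ∈ {c : Cardinal.{u} | l < l ^ c} := not_le.1 h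
  exact absurd (csInf_le (OrderBot.bddBelow _) hmem) (not_le.2 hc)

variable (l)

/-- alphabet building block -/
abbrev Mty : Type u := l.ord.ToType
/-- the alphabet: a linear order with an order-reversing involution -/
abbrev Aty : Type u := (Mty l)ᵒᵈ ⊕ₗ Mty l
/-- index type -/
abbrev Ity : Type u := (th l).ord.ToType
/-- the long line -/
abbrev Lty : Type u := Lex (∀ _ : Ity l, Aty l)

noncomputable instance : LinearOrder (Lty l) := inferInstance

/-- involution on the raw sum -/
def sg0 : (Mty l)ᵒᵈ ⊕ Mty l → (Mty l)ᵒᵈ ⊕ Mty l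
  | .inl m => .inr (OrderDual.ofDual m)
  | .inr m => .inl (OrderDual.toDual m)

/-- order-reversing involution on the alphabet -/
def sg : Aty l → Aty l := fun a => toLex (sg0 l (ofLex a))

variable {l}

lemma sg0_invol (x : (Mty l)ᵒᵈ ⊕ Mty l) : sg0 l (sg0 l x) = x := by
  cases x <;> rfl

lemma sg_invol (a : Aty l) : sg l (sg l a) = a := sg0_invol _

lemma sg0_anti {x y : (Mty l)ᵒᵈ ⊕ Mty l} (h : Sum.Lex (· < ·) (· < ·) x y) :
    Sum.Lex (· < ·) (· < ·) (sg0 l y) (sg0 l x) := by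
  cases h with
  | inl h => exact Sum.Lex.inr h
  | inr h => exact Sum.Lex.inl h
  | sep a b => exact Sum.Lex.sep _ _

lemma sg_anti {a b : Aty l} (h : a < b) : sg l b < sg l a := by
  rw [Sum.Lex.lt_def] at h ⊢
  exact sg0_anti h

lemma sg_ne (a : Aty l) : sg l a ≠ a := by
  have : ∀ x : (Mty l)ᵒᵈ ⊕ Mty l, sg0 l x ≠ x := by
    intro x; cases x <;> simp [sg0]
  exact fun hc => this (ofLex a) (congrArg ofLex hc)


lemma nonempty_ord_toType {c : Cardinal.{u}} (hc : ℵ₀ ≤ c) : Nonempty c.ord.ToType := by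
  rw [Ordinal.toType_nonempty_iff_ne_zero, Ne, Cardinal.ord_eq_zero]
  rintro rfl
  exact absurd hc (by simpa using aleph0_ne_zero)

lemma nonempty_M (hl : ℵ₀ ≤ l) : Nonempty (Mty l) := nonempty_ord_toType hl
lemma nonempty_I (hl : ℵ₀ ≤ l) : Nonempty (Ity l) := nonempty_ord_toType (aleph0_le_th hl)
lemma nonempty_A (hl : ℵ₀ ≤ l) : Nonempty (Aty l) :=
  (nonempty_M hl).elim fun m => ⟨toLex (Sum.inr m)⟩

lemma exists_gt_A (hl : ℵ₀ ≤ l) (a : Aty l) : ∃ b, a < b := by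
  haveI := Cardinal.noMaxOrder hl
  rcases h : ofLex a with m | m
  · exact ⟨toLex (Sum.inr ((nonempty_M hl).some)),
      by rw [show a = toLex (Sum.inl m) by rw [← h]; rfl]; exact Sum.Lex.inl_lt_inr _ _⟩
  · obtain ⟨m', hm'⟩ := exists_gt m
    exact ⟨toLex (Sum.inr m'),
      by rw [show a = toLex (Sum.inr m) by rw [← h]; rfl]; exact Sum.Lex.inr_lt_inr_iff.2 hm'⟩

lemma exists_gt_I (hl : ℵ₀ ≤ l) (i : Ity l) : ∃ k, i < k := by
  haveI := Cardinal.noMaxOrder (aleph0_le_th hl)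
  exact exists_gt i

/-- the involution on the long line -/
def io (f : Lty l) : Lty l := toLex fun i => sg l (ofLex f i)

lemma io_invol (f : Lty l) : io (io f) = f := by
  have h : (fun i => sg l (sg l (ofLex f i))) = ofLex f := funext fun i => sg_invol _
  rw [show io (io f) = toLex (fun i => sg l (sg l (ofLex f i))) from rfl, h]; rfl

lemma L_lt_iff {f g : Lty l} : f < g ↔
    ∃ i, (∀ j, j < i → ofLex f j = ofLex g j) ∧ ofLex f i < ofLex g i := Iff.rfl


lemma io_lt_io {f g : Lty l} (h : f < g) : io g < io f := by
  obtain ⟨i, hj, hi⟩ := L_lt_iff.1 h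
  exact L_lt_iff.2 ⟨i, fun j hji => congrArg (sg l) (hj j hji).symm, sg_anti hi⟩

lemma io_le_io {f g : Lty l} (h : f ≤ g) : io g ≤ io f := by
  rcases h.lt_or_eq with h' | rfl
  · exact (io_lt_io h').le
  · exact le_rfl

lemma io_inj : Function.Injective (io (l := l)) := by
  intro f g h
  rw [← io_invol f, h, io_invol]

lemma exists_gt_L (hl : ℵ₀ ≤ l) (f : Lty l) : ∃ g, f < g := by
  obtain ⟨i⟩ := nonempty_I hl
  obtain ⟨a, ha⟩ := exists_gt_A hl (ofLex f i)
  classical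
  refine ⟨toLex (Function.update (ofLex f) i a), L_lt_iff.2 ⟨i, fun j hj => ?_, ?_⟩⟩
  · rw [ofLex_toLex, Function.update_of_ne (ne_of_lt hj)]
  · rw [ofLex_toLex, Function.update_self]
    exact ha

/-- base point of the alphabet -/
noncomputable def c0 (hl : ℵ₀ ≤ l) : Aty l := (nonempty_A hl).some

/-- the dense set: functions eventually equal to `c0` -/
def Dset (hl : ℵ₀ ≤ l) : Set (Lty l) :=
  {f | ∃ i : Ity l, ∀ j : Ity l, i ≤ j → ofLex f j = c0 hl}

lemma dense_D (hl : ℵ₀ ≤ l) {f g : Lty l} (h : f < g) :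
    ∃ d ∈ Dset hl, f < d ∧ d < g := by
  classical
  obtain ⟨i, hj, hi⟩ := L_lt_iff.1 h
  obtain ⟨k, hik⟩ := exists_gt_I hl i
  obtain ⟨a, ha⟩ := exists_gt_A hl (ofLex f k)
  refine ⟨toLex (fun j => if j < k then ofLex f j else if j = k then a else c0 hl),
    ?_, ?_, ?_⟩
  · obtain ⟨k', hkk'⟩ := exists_gt_I hl k
    refine ⟨k', fun j hj' => ?_⟩
    have h1 : ¬ j < k := not_lt.2 (le_of_lt (lt_of_lt_of_le hkk' hj'))
    have h2 : j ≠ k := by rintro rfl; exact absurd hkk' (not_lt.2 hj')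
    simp [h1, h2]
  · refine L_lt_iff.2 ⟨k, fun j hjk => ?_, ?_⟩
    · simp [hjk]
    · simp only [ofLex_toLex, lt_irrefl, if_false, if_neg, if_pos rfl]
      simpa using ha
  · refine L_lt_iff.2 ⟨i, fun j hji => ?_, ?_⟩
    · have : j < k := lt_trans hji hik
      simpa [this] using hj j hji
    · simpa [hik] using hi


lemma mk_M : #(Mty l) = l := Cardinal.mk_ord_toType l
lemma mk_I : #(Ity l) = th l := Cardinal.mk_ord_toType _

lemma mk_A (hl : ℵ₀ ≤ l) : #(Aty l) = l := by
  have : #(Aty l) = #((Mty l)ᵒᵈ ⊕ Mty l) := rfl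
  rw [this, Cardinal.mk_sum, Cardinal.lift_id, Cardinal.lift_id]
  have : #((Mty l)ᵒᵈ) = #(Mty l) := rfl
  rw [this, mk_M, Cardinal.add_eq_self hl]

lemma mk_L (hl : ℵ₀ ≤ l) : #(Lty l) = l ^ th l := by
  have : #(Lty l) = #(Ity l → Aty l) := rfl
  rw [this, ← Cardinal.power_def, mk_A hl, mk_I]

lemma succ_le_mk_L (hl : ℵ₀ ≤ l) : Order.succ l ≤ #(Lty l) := by
  rw [mk_L hl]
  exact Order.succ_le_of_lt (th_mem hl)

lemma mk_D_le (hl : ℵ₀ ≤ l) : #(Dset hl) ≤ l := by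
  classical
  set recon : (Σ i : Ity l, (Iio i → Aty l)) → Lty l :=
    fun p => toLex (fun j => if h : j < p.1 then p.2 ⟨j, h⟩ else c0 hl) with hrecon
  have hinj : Function.Injective
      (fun f : Dset hl => (⟨Classical.choose f.2,
        fun j => ofLex f.1 j.1⟩ : Σ i : Ity l, (Iio i → Aty l))) := by
    intro f g hfg
    have key : ∀ f : Dset hl, recon (⟨Classical.choose f.2,
        fun j => ofLex f.1 j.1⟩ : Σ i : Ity l, (Iio i → Aty l)) = f.1 := by
      intro f
      have hf := Classical.choose_spec f.2
      rw [hrecon]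
      have : (fun j => if h : j < Classical.choose f.2 then ofLex f.1 j else c0 hl)
          = ofLex f.1 := by
        funext j
        rcases lt_or_ge j (Classical.choose f.2) with hj | hj
        · exact dif_pos hj
        · simp [not_lt.2 hj, (hf j hj).symm]
      simpa [this]
    apply Subtype.ext
    rw [← key f, ← key g]
    exact congrArg recon hfg
  have h1 : #(Dset hl) ≤ #(Σ i : Ity l, (Iio i → Aty l)) := Cardinal.mk_le_of_injective hinj
  refine h1.trans ?_
  rw [Cardinal.mk_sigma]
  have hterm : ∀ i : Ity l, #(Iio i → Aty l) ≤ l := by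
    intro i
    rw [← Cardinal.power_def, mk_A hl]
    exact pow_le_of_lt_th hl (Cardinal.mk_Iio_ord_toType i)
  calc Cardinal.sum (fun i : Ity l => #(Iio i → Aty l))
      ≤ Cardinal.sum (fun _ : Ity l => l) := Cardinal.sum_le_sum _ _ hterm
    _ = #(Ity l) * l := Cardinal.sum_const' _ _
    _ = th l * l := by rw [mk_I]
    _ ≤ l * l := mul_le_mul_left (th_le_l hl) l
    _ = l := Cardinal.mul_eq_self hl


lemma aleph0_le_succ (hl : ℵ₀ ≤ l) : ℵ₀ ≤ Order.succ l := hl.trans (Order.le_succ l)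

/-- embedding of `succ l` many points into the long line -/
noncomputable def emb (hl : ℵ₀ ≤ l) : (Order.succ l).ord.ToType ↪ Lty l := by
  have h : #((Order.succ l).ord.ToType) ≤ #(Lty l) := by
    rw [Cardinal.mk_ord_toType]
    exact succ_le_mk_L hl
  exact Classical.choice ((Cardinal.le_def _ _).1 h)

/-- the point set of the space -/
def Xset (hl : ℵ₀ ≤ l) : Set (Lty l) :=
  range (emb hl) ∪ io '' range (emb hl) ∪ Dset hl ∪ io '' Dset hl

lemma io_closed (hl : ℵ₀ ≤ l) {x : Lty l} (hx : x ∈ Xset hl) : io x ∈ Xset hl := by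
  rcases hx with ((h | h) | h) | h
  · exact Or.inl (Or.inl (Or.inr ⟨x, h, rfl⟩))
  · obtain ⟨y, hy, rfl⟩ := h
    rw [io_invol]
    exact Or.inl (Or.inl (Or.inl hy))
  · exact Or.inr ⟨x, h, rfl⟩
  · obtain ⟨y, hy, rfl⟩ := h
    rw [io_invol]
    exact Or.inl (Or.inr hy)

lemma D_sub_X (hl : ℵ₀ ≤ l) : Dset hl ⊆ Xset hl := fun _ h => Or.inl (Or.inr h)

lemma mk_X (hl : ℵ₀ ≤ l) : #(Xset hl) = Order.succ l := by
  refine le_antisymm ?_ ?_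
  · have h1 : #(range (emb hl)) ≤ Order.succ l := by
      rw [Cardinal.mk_range_eq _ (emb hl).injective, Cardinal.mk_ord_toType]
    have h2 : #(io '' range (emb hl)) ≤ Order.succ l :=
      le_trans Cardinal.mk_image_le h1
    have h3 : #(Dset hl) ≤ Order.succ l := (mk_D_le hl).trans (Order.le_succ l)
    have h4 : #(io '' Dset hl) ≤ Order.succ l := le_trans Cardinal.mk_image_le h3
    have := le_trans (Cardinal.mk_union_le _ _)
      (add_le_add (le_trans (Cardinal.mk_union_le _ _)
        (add_le_add (le_trans (Cardinal.mk_union_le _ _) (add_le_add h1 h2)) h3)) h4)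
    simpa [Xset, Cardinal.add_eq_self (aleph0_le_succ hl)] using this
  · calc Order.succ l = #(range (emb hl)) := by
          rw [Cardinal.mk_range_eq _ (emb hl).injective, Cardinal.mk_ord_toType]
      _ ≤ #(Xset hl) := Cardinal.mk_le_mk_of_subset
          (fun x hx => Or.inl (Or.inl (Or.inl hx)))

lemma nonempty_X (hl : ℵ₀ ≤ l) : Nonempty (Xset hl) := by
  have := nonempty_ord_toType (aleph0_le_succ hl)
  exact ⟨⟨emb hl this.some, Or.inl (Or.inl (Or.inl ⟨_, rfl⟩))⟩⟩


/-- the space -/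
def Xt (hl : ℵ₀ ≤ l) : Type u := ↥(Xset hl)

instance (hl : ℵ₀ ≤ l) : CoeOut (Xt hl) (Lty l) := ⟨fun x => x.1⟩

/-- half-open interval in the space -/
def Ico' (hl : ℵ₀ ≤ l) (a b : Lty l) : Set (Xt hl) := {z | a ≤ z.1 ∧ z.1 < b}

/-- generating family -/
def SS (hl : ℵ₀ ≤ l) : Set (Set (Xt hl)) := {v | ∃ a b : Lty l, v = Ico' hl a b}

/-- the Sorgenfrey-type topology -/
def tX (hl : ℵ₀ ≤ l) : TopologicalSpace (Xt hl) := .generateFrom (SS hl)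

lemma isOpen_Ico' (hl : ℵ₀ ≤ l) (a b : Lty l) : (tX hl).IsOpen (Ico' hl a b) :=
  TopologicalSpace.GenerateOpen.basic _ ⟨a, b, rfl⟩

lemma nbhd (hl : ℵ₀ ≤ l) {U : Set (Xt hl)} (hU : (tX hl).IsOpen U) :
    ∀ x : Xt hl, x ∈ U → ∃ d ∈ Dset hl, x.1 < d ∧ Ico' hl x.1 d ⊆ U := by
  induction hU with
  | basic u hu =>
    obtain ⟨a, b, rfl⟩ := hu
    intro x hx
    obtain ⟨d, hd, hxd, hdb⟩ := dense_D hl hx.2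
    exact ⟨d, hd, hxd, fun z hz => ⟨le_trans hx.1 hz.1, lt_trans hz.2 hdb⟩⟩
  | univ =>
    intro x _
    obtain ⟨g, hg⟩ := exists_gt_L hl x.1
    obtain ⟨d, hd, hxd, _⟩ := dense_D hl hg
    exact ⟨d, hd, hxd, fun _ _ => trivial⟩
  | inter u v _ _ ihu ihv =>
    intro x hx
    obtain ⟨d1, hd1, hxd1, hsub1⟩ := ihu x hx.1
    obtain ⟨d2, hd2, hxd2, hsub2⟩ := ihv x hx.2
    rcases le_total d1 d2 with h | h
    · exact ⟨d1, hd1, hxd1, fun z hz =>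
        ⟨hsub1 hz, hsub2 ⟨hz.1, lt_of_lt_of_le hz.2 h⟩⟩⟩
    · exact ⟨d2, hd2, hxd2, fun z hz =>
        ⟨hsub1 ⟨hz.1, lt_of_lt_of_le hz.2 h⟩, hsub2 hz⟩⟩
  | sUnion ts hts ih =>
    intro x hx
    obtain ⟨t0, ht0, hxt0⟩ := hx
    obtain ⟨d, hd, hxd, hsub⟩ := ih t0 ht0 x hxt0
    exact ⟨d, hd, hxd, fun z hz => ⟨t0, ht0, hsub hz⟩⟩

/-- the small basis -/
def Bas (hl : ℵ₀ ≤ l) : Set (Set (Xt hl)) :=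
  range (fun p : Xt hl × (Dset hl) => Ico' hl p.1.1 p.2.1)

lemma isBasis_Bas (hl : ℵ₀ ≤ l) :
    @TopologicalSpace.IsTopologicalBasis (Xt hl) (tX hl) (Bas hl) := by
  letI := tX hl
  refine TopologicalSpace.isTopologicalBasis_of_isOpen_of_nhds ?_ ?_
  · rintro u ⟨⟨x, d⟩, rfl⟩
    exact isOpen_Ico' hl _ _
  · intro x u hxu hu
    obtain ⟨d, hd, hxd, hsub⟩ := nbhd hl hu x hxu
    exact ⟨Ico' hl x.1 d, ⟨(⟨x, ⟨d, hd⟩⟩ : Xt hl × (Dset hl)), rfl⟩,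
      ⟨le_refl _, hxd⟩, hsub⟩


lemma tweight_le (hl : ℵ₀ ≤ l) : tweight (tX hl) ≤ Order.succ l := by
  refine csInf_le_of_le (OrderBot.bddBelow _) ⟨Bas hl, isBasis_Bas hl, rfl⟩ ?_
  have h1 : #(Bas hl) ≤ #(Xt hl × (Dset hl)) := Cardinal.mk_range_le
  have h2 : #(Xt hl × (Dset hl)) = #(Xt hl) * #(Dset hl) := by
    rw [Cardinal.mk_prod, Cardinal.lift_id, Cardinal.lift_id]
  have h3 : #(Xt hl) = Order.succ l := mk_X hl
  refine h1.trans ?_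
  rw [h2, h3]
  calc Order.succ l * #(Dset hl) ≤ Order.succ l * Order.succ l :=
        mul_le_mul_right ((mk_D_le hl).trans (Order.le_succ l)) _
    _ = Order.succ l := Cardinal.mul_eq_self (aleph0_le_succ hl)


lemma mem_self_Ico' (hl : ℵ₀ ≤ l) {x : Xt hl} {b : Lty l} (h : x.1 < b) :
    x ∈ Ico' hl x.1 b := ⟨le_refl _, h⟩

lemma kcompact_X (hl : ℵ₀ ≤ l) : KCompact (Order.succ l) (tX hl) := by
  classical
  haveI : Nonempty (Xt hl) := nonempty_X hl
  intro 𝒰 hop hcov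
  have hpick : ∀ x : Xt hl, ∃ (U : Set (Xt hl)) (d : Lty l),
      U ∈ 𝒰 ∧ d ∈ Dset hl ∧ x.1 < d ∧ Ico' hl x.1 d ⊆ U := by
    intro x
    have hx : x ∈ ⋃₀ 𝒰 := by rw [hcov]; trivial
    obtain ⟨U, hU, hxU⟩ := hx
    obtain ⟨d, hd, hxd, hsub⟩ := nbhd hl (hop U hU) x hxU
    exact ⟨U, d, hU, hd, hxd, hsub⟩
  choose U d hU hd hxd hsub using hpick
  set A : Set (Xt hl) := {x | ¬ ∃ x' : Xt hl, x'.1 < x.1 ∧ x.1 < d x'} with hA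
  have hmkA : #A ≤ l := by
    have hde : ∀ x : A, ∃ e : Lty l, e ∈ Dset hl ∧ x.1.1 < e ∧ e < d x.1 :=
      fun x => dense_D hl (hxd x.1)
    choose ee he hxe hed using hde
    have hinj : Function.Injective (fun x : A => (⟨ee x, he x⟩ : Dset hl)) := by
      intro x y hxy
      by_contra hne
      have hne' : x.1.1 ≠ y.1.1 := fun h => hne (Subtype.ext (Subtype.ext h))
      have hee : ee x = ee y := congrArg Subtype.val hxy
      rcases hne'.lt_or_gt with h | h
      · exact y.2 ⟨x.1, h, lt_trans (hxe y) (hee ▸ hed x)⟩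
      · exact x.2 ⟨y.1, h, lt_trans (hxe x) (hee.symm ▸ hed y)⟩
    exact (Cardinal.mk_le_of_injective hinj).trans (mk_D_le hl)
  set Q : Lty l → Lty l → Prop := fun a b => ∃ x : Xt hl, x.1 ≤ a ∧ b ≤ d x with hQ
  set g : Dset hl × Dset hl → Set (Xt hl) := fun p =>
    if h : Q p.1.1 p.2.1 then U (Classical.choose h) else U (Classical.arbitrary (Xt hl))
    with hg
  set 𝒰₀ : Set (Set (Xt hl)) := (fun x : Xt hl => U x) '' A ∪ range g with h𝒰₀
  refine ⟨𝒰₀, ?_, ?_, ?_⟩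
  · rintro V (⟨x, _, rfl⟩ | ⟨p, rfl⟩)
    · exact hU x
    · rw [hg]
      dsimp only
      split_ifs
      · exact hU _
      · exact hU _
  · have h1 : #𝒰₀ ≤ #((fun x : Xt hl => U x) '' A) + #(range g) :=
      Cardinal.mk_union_le _ _
    have h2 : #((fun x : Xt hl => U x) '' A) ≤ l := Cardinal.mk_image_le.trans hmkA
    have h3 : #(range g) ≤ l := by
      refine Cardinal.mk_range_le.trans ?_
      have : #(Dset hl × Dset hl) = #(Dset hl) * #(Dset hl) := by simp
      rw [this]
      calc #(Dset hl) * #(Dset hl) ≤ l * l :=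
            mul_le_mul' (mk_D_le hl) (mk_D_le hl)
        _ = l := Cardinal.mul_eq_self hl
    have : #𝒰₀ ≤ l := by
      refine (h1.trans (add_le_add h2 h3)).trans ?_
      rw [Cardinal.add_eq_self hl]
    exact lt_of_le_of_lt this (Order.lt_succ l)
  · rw [eq_univ_iff_forall]
    intro z
    by_cases hz : z ∈ A
    · exact ⟨U z, Or.inl ⟨z, hz, rfl⟩, hsub z (mem_self_Ico' hl (hxd z))⟩
    · obtain ⟨x', hx'z, hzd⟩ := not_not.1 hz
      obtain ⟨d1, hd1, h1a, h1b⟩ := dense_D hl hx'z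
      obtain ⟨d2, hd2, h2a, h2b⟩ := dense_D hl hzd
      have hq : Q d1 d2 := ⟨x', h1a.le, h2b.le⟩
      refine ⟨g (⟨d1, hd1⟩, ⟨d2, hd2⟩), Or.inr ⟨_, rfl⟩, ?_⟩
      rw [hg]
      dsimp only
      rw [dif_pos hq]
      have hspec := Classical.choose_spec hq
      exact hsub _ ⟨le_trans hspec.1 h1b.le, lt_of_lt_of_le h2a hspec.2⟩


/-- closed rays -/
def Ici' (hl : ℵ₀ ≤ l) (a : Lty l) : Set (Xt hl) := {z | a ≤ z.1}

lemma isOpen_Ici' (hl : ℵ₀ ≤ l) (a : Lty l) : (tX hl).IsOpen (Ici' hl a) := by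
  letI := tX hl
  have heq : Ici' hl a = ⋃ b : Lty l, Ico' hl a b := by
    ext z
    constructor
    · intro hz
      obtain ⟨b, hb⟩ := exists_gt_L hl z.1
      exact mem_iUnion.2 ⟨b, hz, hb⟩
    · rintro hz
      obtain ⟨b, hb⟩ := mem_iUnion.1 hz
      exact hb.1
  rw [heq]
  exact isOpen_iUnion fun b => isOpen_Ico' hl a b

/-- the anti-diagonal -/
def Dhat (hl : ℵ₀ ≤ l) : Set (Xt hl × Xt hl) := {p | p.2.1 = io p.1.1}

/-- corner neighbourhoods -/
def Bx (hl : ℵ₀ ≤ l) (x : Xt hl) : Set (Xt hl × Xt hl) :=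
  Ici' hl x.1 ×ˢ Ici' hl (io x.1)

lemma isOpen_compl_Dhat (hl : ℵ₀ ≤ l) :
    @IsOpen _ (@instTopologicalSpaceProd _ _ (tX hl) (tX hl)) (Dhat hl)ᶜ := by
  letI := tX hl
  rw [isOpen_iff_forall_mem_open]
  rintro ⟨u, v⟩ hp
  have hp' : v.1 ≠ io u.1 := hp
  rcases lt_trichotomy v.1 (io u.1) with hlt | heq | hgt
  · have h2 : u.1 < io v.1 := by
      have := io_lt_io hlt
      rwa [io_invol] at this
    obtain ⟨dd, _, hud, hdv⟩ := dense_D hl h2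
    refine ⟨Ico' hl u.1 dd ×ˢ Ico' hl v.1 (io dd), ?_, ?_, ?_⟩
    · rintro ⟨a, b⟩ ⟨ha, hb⟩ hmem
      have h3 : io dd < io a.1 := io_lt_io ha.2
      rw [← hmem] at h3
      exact absurd hb.2 (not_lt.2 h3.le)
    · exact IsOpen.prod (isOpen_Ico' hl _ _) (isOpen_Ico' hl _ _)
    · refine ⟨⟨le_rfl, hud⟩, le_rfl, ?_⟩
      have := io_lt_io hdv
      rwa [io_invol] at this
  · exact absurd heq hp'
  · refine ⟨Ici' hl u.1 ×ˢ Ici' hl v.1, ?_, ?_,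
      ⟨show u.1 ≤ u.1 from le_rfl, show v.1 ≤ v.1 from le_rfl⟩⟩
    · rintro ⟨a, b⟩ ⟨ha, hb⟩ hmem
      have h3 : io a.1 ≤ io u.1 := io_le_io ha
      rw [← hmem] at h3
      exact absurd (lt_of_lt_of_le hgt (hb.trans h3)) (lt_irrefl _)
    · exact IsOpen.prod (isOpen_Ici' hl _) (isOpen_Ici' hl _)

lemma not_sq (hl : ℵ₀ ≤ l) : ¬ KSquareCompact (Order.succ l) := by
  classical
  intro hsq
  have hc2 := hsq (Xt hl) (tX hl) (tweight_le hl) (kcompact_X hl)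
  letI := tX hl
  set 𝒱 : Set (Set (Xt hl × Xt hl)) :=
    insert (Dhat hl)ᶜ (range fun x : Xt hl => Bx hl x) with h𝒱
  have hopen : ∀ V ∈ 𝒱, @IsOpen _ (@instTopologicalSpaceProd _ _ (tX hl) (tX hl)) V := by
    intro V hV
    rcases Set.mem_insert_iff.1 hV with rfl | ⟨x, rfl⟩
    · exact isOpen_compl_Dhat hl
    · exact IsOpen.prod (isOpen_Ici' hl _) (isOpen_Ici' hl _)
  have hcov : ⋃₀ 𝒱 = Set.univ := by
    rw [Set.eq_univ_iff_forall]
    intro p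
    by_cases h : p.2.1 = io p.1.1
    · exact ⟨Bx hl p.1, Set.mem_insert_iff.2 (Or.inr ⟨p.1, rfl⟩),
        ⟨show p.1.1 ≤ p.1.1 from le_rfl, show io p.1.1 ≤ p.2.1 from le_of_eq h.symm⟩⟩
    · exact ⟨(Dhat hl)ᶜ, Set.mem_insert _ _, h⟩
  obtain ⟨𝒱₀, hsub, hcard, hcov₀⟩ := hc2 𝒱 hopen hcov
  have hBmem : ∀ x : Xt hl, Bx hl x ∈ 𝒱₀ := by
    intro x
    have hx' : io x.1 ∈ Xset hl := io_closed hl x.2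
    have hp : ((x, ⟨io x.1, hx'⟩) : Xt hl × Xt hl) ∈ ⋃₀ 𝒱₀ := by
      rw [hcov₀]; trivial
    obtain ⟨V, hV, hpV⟩ := hp
    rcases Set.mem_insert_iff.1 (hsub hV) with rfl | ⟨z, rfl⟩
    · exact absurd rfl hpV
    · obtain ⟨h1, h2⟩ := hpV
      have h3 : x.1 ≤ z.1 := by
        have := io_le_io h2
        rwa [io_invol, io_invol] at this
      have : z = x := Subtype.ext (le_antisymm h1 h3)
      rwa [this] at hV
  have hinj : Function.Injective (fun x : Xt hl => (⟨Bx hl x, hBmem x⟩ : 𝒱₀)) := by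
    intro x y hxy
    have hBeq : Bx hl x = Bx hl y := congrArg Subtype.val hxy
    have hx' : io x.1 ∈ Xset hl := io_closed hl x.2
    have hmem : ((x, ⟨io x.1, hx'⟩) : Xt hl × Xt hl) ∈ Bx hl x :=
      ⟨show x.1 ≤ x.1 from le_rfl, show io x.1 ≤ io x.1 from le_rfl⟩
    rw [hBeq] at hmem
    obtain ⟨h1, h2⟩ := hmem
    have h3 : x.1 ≤ y.1 := by
      have := io_le_io h2
      rwa [io_invol, io_invol] at this
    exact Subtype.ext (le_antisymm h3 h1)
  have hge : Order.succ l ≤ #𝒱₀ := by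
    calc Order.succ l = #(Xt hl) := (mk_X hl).symm
      _ ≤ #𝒱₀ := Cardinal.mk_le_of_injective hinj
  exact absurd hcard (not_lt.2 hge)

lemma powerlt_th (hl : ℵ₀ ≤ l) : l ^< th l = l := by
  refine le_antisymm (Cardinal.powerlt_le.2 fun x hx => pow_le_of_lt_th hl hx) ?_
  have h1 : (1 : Cardinal) < th l := lt_of_lt_of_le Cardinal.one_lt_aleph0 (aleph0_le_th hl)
  simpa using Cardinal.le_powerlt l h1

end


theorem stmt_6 (l : Cardinal.{u}) (hl : Cardinal.aleph0 ≤ l) :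
    (∃ μ θ : Cardinal.{u}, Cardinal.aleph0 ≤ μ ∧ Cardinal.aleph0 ≤ θ ∧
      μ ^< θ = μ ∧ μ < Order.succ l ∧ Order.succ l ≤ μ ^ θ) ∧
    ¬ KSquareCompact (Order.succ l) := by
  exact ⟨⟨l, th l, hl, aleph0_le_th hl, powerlt_th hl, Order.lt_succ l,
    Order.succ_le_of_lt (th_mem hl)⟩, not_sq hl⟩
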